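/- Let $(A,\circ_A)$ be a Zinbiel algebra and $r\in A\otimes A$ whose skew-symmetric part is $(L,L+R)$-invariant, with $I = r_+-r_-$. Define $\xi\cdot_+\eta := R^*_{I\eta}\xi$ on $A^*$. Then $(A^*,\cdot_+)$ is a Zinbiel algebra. -/
import Mathlib


open scoped TensorProduct

/-- The pairing of `ξ ⊗ η` with a 2-tensor: `(ξ ⊗ η)(Σ aᵢ ⊗ bᵢ) = Σ ξ(aᵢ) η(bᵢ)`. -/
noncomputable def tensorPair {K : Type*} [Field K] {A : Type*} [AddCommGroup A] [Module K A]
    (ξ η : Module.Dual K A) : (A ⊗[K] A) →ₗ[K] K :=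
  TensorProduct.lift ((LinearMap.lsmul K K ∘ₗ ξ).compl₂ η)

/-- The product `ξ ·₊ η := R*_{Iη} ξ` on `A*`, where `⟨R_x* ξ, y⟩ = -⟨ξ, y ∘ x⟩`. -/
def dualPlusMul {K : Type*} [Field K] {A : Type*} [AddCommGroup A] [Module K A]
    (mul : A →ₗ[K] A →ₗ[K] A) (I : Module.Dual K A →ₗ[K] A)
    (ξ η : Module.Dual K A) : Module.Dual K A :=
  -(ξ ∘ₗ mul.flip (I η))

/-- Let `(A, ∘)` be a Zinbiel algebra and `r ∈ A ⊗ A` whose skew-symmetric part is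
`(L, L+R)`-invariant, with `I = r₊ - r₋`.  Then `ξ ·₊ η := R*_{Iη} ξ` makes `(A*, ·₊)` a
Zinbiel algebra. -/
theorem dual_plus_zinbiel {K : Type*} [Field K] {A : Type*} [AddCommGroup A]
    [Module K A] (h2 : (2 : K) ≠ 0)
    (mul : A →ₗ[K] A →ₗ[K] A)
    (hZ : ∀ x y z : A, mul x (mul y z) = mul (mul x y + mul y x) z)
    (r : A ⊗[K] A) (rplus rminus : Module.Dual K A →ₗ[K] A)
    (hrplus : ∀ ξ η : Module.Dual K A, η (rplus ξ) = tensorPair ξ η r)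
    (hrminus : ∀ ξ η : Module.Dual K A, ξ (rminus η) = tensorPair ξ η r)
    (hinv : ∀ x : A,
      (TensorProduct.map (mul x) (LinearMap.id : A →ₗ[K] A)
        - TensorProduct.map (LinearMap.id : A →ₗ[K] A) (mul x + mul.flip x))
        ((2 : K)⁻¹ • (r - TensorProduct.comm K A A r)) = 0) :
    ∀ ξ η θ : Module.Dual K A,
      dualPlusMul mul (rplus - rminus) ξ (dualPlusMul mul (rplus - rminus) η θ)
        = dualPlusMul mul (rplus - rminus)
            (dualPlusMul mul (rplus - rminus) ξ η
              + dualPlusMul mul (rplus - rminus) η ξ) θ := by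
  intro ξ η θ
  set I : Module.Dual K A →ₗ[K] A := rplus - rminus with hIdef
  have tp_tmul : ∀ (α β : Module.Dual K A) (a b : A),
      tensorPair α β (a ⊗ₜ[K] b) = α a * β b := by
    intro α β a b
    simp [tensorPair, smul_eq_mul]
  have tp_map : ∀ (f g : A →ₗ[K] A) (α β : Module.Dual K A) (t : A ⊗[K] A),
      tensorPair α β (TensorProduct.map f g t) = tensorPair (α ∘ₗ f) (β ∘ₗ g) t := by
    intro f g α β t
    induction t using TensorProduct.induction_on with
    | zero => simp
    | tmul a b => simp [tp_tmul]
    | add x y hx hy => simp [map_add, hx, hy]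
  have tp_comm : ∀ (α β : Module.Dual K A) (t : A ⊗[K] A),
      tensorPair α β (TensorProduct.comm K A A t) = tensorPair β α t := by
    intro α β t
    induction t using TensorProduct.induction_on with
    | zero => simp
    | tmul a b => simp [tp_tmul, mul_comm]
    | add x y hx hy => simp [map_add, hx, hy]
  have tp_addr : ∀ (α δ₁ δ₂ : Module.Dual K A) (t : A ⊗[K] A),
      tensorPair α (δ₁ + δ₂) t = tensorPair α δ₁ t + tensorPair α δ₂ t := by
    intro α δ₁ δ₂ t
    induction t using TensorProduct.induction_on with
    | zero => simp
    | tmul a b => simp [tp_tmul, mul_add]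
    | add x y hx hy => simp only [map_add, hx, hy]; ring
  have tp_addl : ∀ (γ₁ γ₂ δ : Module.Dual K A) (t : A ⊗[K] A),
      tensorPair (γ₁ + γ₂) δ t = tensorPair γ₁ δ t + tensorPair γ₂ δ t := by
    intro γ₁ γ₂ δ t
    induction t using TensorProduct.induction_on with
    | zero => simp
    | tmul a b => simp [tp_tmul, add_mul]
    | add x y hx hy => simp only [map_add, hx, hy]; ring
  have hIapply : ∀ (α β : Module.Dual K A),
      β (I α) = tensorPair α β r - tensorPair β α r := by
    intro α β
    have h1 : β (rplus α) = tensorPair α β r := hrplus α β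
    have h2' : β (rminus α) = tensorPair β α r := hrminus β α
    simp [hIdef, LinearMap.sub_apply, map_sub, h1, h2']
  have skew : ∀ α β : Module.Dual K A, β (I α) = - α (I β) := by
    intro α β; rw [hIapply, hIapply]; ring
  have Kvec : ∀ (x : A) (α : Module.Dual K A),
      I (α ∘ₗ mul x) = mul x (I α) + mul (I α) x := by
    intro x α
    rw [← sub_eq_zero, ← Module.forall_dual_apply_eq_zero_iff K]
    intro β
    have h := congrArg (tensorPair α β) (hinv x)
    have hca : β ∘ₗ (mul x + mul.flip x) = β ∘ₗ mul x + β ∘ₗ mul.flip x := by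
      ext z; simp
    simp only [map_zero, LinearMap.sub_apply, map_sub, map_smul, tp_map,
      LinearMap.comp_id, tp_comm, hca, tp_addr, tp_addl, smul_eq_mul] at h
    have hX := (mul_eq_zero.mp h).resolve_left (inv_ne_zero h2)
    have g1 : β (I (α ∘ₗ mul x))
        = tensorPair (α ∘ₗ mul x) β r - tensorPair β (α ∘ₗ mul x) r := hIapply _ β
    have g2 : (β ∘ₗ mul x) (I α)
        = tensorPair α (β ∘ₗ mul x) r - tensorPair (β ∘ₗ mul x) α r := hIapply α _
    have g3 : (β ∘ₗ mul.flip x) (I α)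
        = tensorPair α (β ∘ₗ mul.flip x) r - tensorPair (β ∘ₗ mul.flip x) α r := hIapply α _
    have e2 : β ((mul x) (I α)) = (β ∘ₗ mul x) (I α) := rfl
    have e3 : β ((mul (I α)) x) = (β ∘ₗ mul.flip x) (I α) := rfl
    simp only [map_sub, map_add]
    rw [e2, e3]
    linear_combination g1 - g2 - g3 + hX
  have lcomm : ∀ a b c : A, mul a (mul b c) = mul b (mul a c) := by
    intro a b c
    rw [hZ a b c, hZ b a c, add_comm]
  have star : ∀ (z : A) (α β : Module.Dual K A),
      α (mul z (I β)) + β (mul z (I α)) = - β (mul (I α) z) := by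
    intro z α β
    have h1 : α (mul z (I β)) = (α ∘ₗ mul z) (I β) := rfl
    rw [h1, skew β (α ∘ₗ mul z), Kvec z α, map_add]
    ring
  apply LinearMap.ext
  intro y
  simp only [dualPlusMul, LinearMap.neg_apply, LinearMap.comp_apply, LinearMap.flip_apply,
    LinearMap.add_apply, map_neg, map_add, neg_neg, neg_add]
  have hLHS : ξ (mul y (I (η ∘ₗ mul.flip (I θ)))) = - η (mul y (mul (I ξ) (I θ))) := by
    have e1 : ξ (mul y (I (η ∘ₗ mul.flip (I θ))))
        = (ξ ∘ₗ mul y) (I (η ∘ₗ mul.flip (I θ))) := rfl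
    rw [e1, skew (η ∘ₗ mul.flip (I θ)) (ξ ∘ₗ mul y), Kvec y ξ]
    have e4 : (η ∘ₗ mul.flip (I θ)) (mul y (I ξ) + mul (I ξ) y)
        = η (mul y (mul (I ξ) (I θ))) := by
      have : mul.flip (I θ) (mul y (I ξ) + mul (I ξ) y)
          = mul (mul y (I ξ) + mul (I ξ) y) (I θ) := rfl
      simp only [LinearMap.comp_apply, this]
      rw [← hZ y (I ξ) (I θ)]
    rw [e4]
  have hRHS : ξ (mul (mul y (I θ)) (I η)) + η (mul (mul y (I θ)) (I ξ))
      = - η (mul y (mul (I ξ) (I θ))) := by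
    rw [star (mul y (I θ)) ξ η, lcomm]
  rw [hLHS, hRHS]
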